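/- Define hypersequents as finite lists of sequents (pairs of finite lists of propositional formulas with single-conclusion succedent), and a derivability predicate HLJ generated by the axioms (Id), (Bot), the external structural rules (ew), (ec), (ee), internal structural rules, cut, and the standard logical rules. Then HLJ has the component soundness property with respect to Heyting algebra semantics: if HLJ derives the hypersequent Γ₁ ⇒ φ₁ | ⋯ | Γₙ ⇒ φₙ, then for every Heyting-algebra valuation v, ⊤ ≤ ⨆ᵢ (⟦⋀Γᵢ⟧ᵥ ⇨ ⟦φᵢ⟧ᵥ). -/
import Mathlib


/-- Propositional formulas over countably many atoms with `∧`, `∨`, `→`, `⊥`. -/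
inductive PForm : Type
  | atom : ℕ → PForm
  | bot : PForm
  | imp : PForm → PForm → PForm
  | and : PForm → PForm → PForm
  | or : PForm → PForm → PForm

/-- A single-conclusion sequent `Γ ⇒ φ`: a finite list of formulas together
with one succedent formula. -/
abbrev Sequent : Type := List PForm × PForm

/-- A hypersequent: a finite list of single-conclusion sequents. -/
abbrev Hypersequent : Type := List Sequent

/-- The intuitionistic single-conclusion hypersequent calculus HLJ:
axioms (Id), (Bot); external weakening, contraction, exchange; internal
(antecedent) weakening, contraction, exchange; cut; and the standard logical
rules for `∧`, `∨`, `→`. -/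
inductive HLJ : Hypersequent → Prop
  | id (φ : PForm) : HLJ [([φ], φ)]
  | bot (φ : PForm) : HLJ [([PForm.bot], φ)]
  | ew (S : Sequent) {G} : HLJ G → HLJ (S :: G)
  | ec {S : Sequent} {G} : HLJ (S :: S :: G) → HLJ (S :: G)
  | ee {S T : Sequent} (G : Hypersequent) {H} :
      HLJ (G ++ S :: T :: H) → HLJ (G ++ T :: S :: H)
  | iwL (φ : PForm) {Γ δ G} : HLJ ((Γ, δ) :: G) → HLJ ((φ :: Γ, δ) :: G)
  | icL {φ : PForm} {Γ δ G} :
      HLJ ((φ :: φ :: Γ, δ) :: G) → HLJ ((φ :: Γ, δ) :: G)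
  | ieL {φ ψ : PForm} (Γ₁ : List PForm) {Γ₂ δ G} :
      HLJ ((Γ₁ ++ φ :: ψ :: Γ₂, δ) :: G) → HLJ ((Γ₁ ++ ψ :: φ :: Γ₂, δ) :: G)
  | cut {Γ₀ Γ₁ : List PForm} {δ χ : PForm} {G} :
      HLJ ((Γ₀, δ) :: G) → HLJ ((δ :: Γ₁, χ) :: G) →
      HLJ ((Γ₀ ++ Γ₁, χ) :: G)
  | andL₁ {φ₁ : PForm} (φ₂ : PForm) {Γ δ G} :
      HLJ ((φ₁ :: Γ, δ) :: G) → HLJ ((PForm.and φ₁ φ₂ :: Γ, δ) :: G)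
  | andL₂ (φ₁ : PForm) {φ₂ : PForm} {Γ δ G} :
      HLJ ((φ₂ :: Γ, δ) :: G) → HLJ ((PForm.and φ₁ φ₂ :: Γ, δ) :: G)
  | andR {Γ} {φ ψ : PForm} {G} :
      HLJ ((Γ, φ) :: G) → HLJ ((Γ, ψ) :: G) → HLJ ((Γ, PForm.and φ ψ) :: G)
  | orL {φ ψ : PForm} {Γ δ G} :
      HLJ ((φ :: Γ, δ) :: G) → HLJ ((ψ :: Γ, δ) :: G) →
      HLJ ((PForm.or φ ψ :: Γ, δ) :: G)
  | orR₁ {Γ} {φ : PForm} (ψ : PForm) {G} :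
      HLJ ((Γ, φ) :: G) → HLJ ((Γ, PForm.or φ ψ) :: G)
  | orR₂ (φ : PForm) {ψ : PForm} {Γ G} :
      HLJ ((Γ, ψ) :: G) → HLJ ((Γ, PForm.or φ ψ) :: G)
  | impL {φ ψ : PForm} {Γ δ G} :
      HLJ ((Γ, φ) :: G) → HLJ ((ψ :: Γ, δ) :: G) →
      HLJ ((PForm.imp φ ψ :: Γ, δ) :: G)
  | impR {φ ψ : PForm} {Γ G} :
      HLJ ((φ :: Γ, ψ) :: G) → HLJ ((Γ, PForm.imp φ ψ) :: G)

/-- Interpretation of a formula in a Heyting algebra under a valuation of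
the atoms. -/
def evalForm {H : Type*} [HeytingAlgebra H] (v : ℕ → H) : PForm → H
  | PForm.atom n => v n
  | PForm.bot => ⊥
  | PForm.imp φ ψ => evalForm v φ ⇨ evalForm v ψ
  | PForm.and φ ψ => evalForm v φ ⊓ evalForm v ψ
  | PForm.or φ ψ => evalForm v φ ⊔ evalForm v ψ

/-- Interpretation of a sequent `Γ ⇒ φ`: `⟦⋀Γ⟧ ⇨ ⟦φ⟧`. -/
def evalSeq {H : Type*} [HeytingAlgebra H] (v : ℕ → H) (S : Sequent) : H :=
  (S.1.map (evalForm v)).foldr (· ⊓ ·) ⊤ ⇨ evalForm v S.2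

/-- Interpretation of a hypersequent: the join of the interpretations of its
components. -/
def evalHyp {H : Type*} [HeytingAlgebra H] (v : ℕ → H) (G : Hypersequent) : H :=
  (G.map (evalSeq v)).foldr (· ⊔ ·) ⊥


section Aux
variable {H : Type*} [HeytingAlgebra H] (v : ℕ → H)

/-- Meet interpretation of a list of formulas. -/
def meetL (Γ : List PForm) : H := (Γ.map (evalForm v)).foldr (· ⊓ ·) ⊤

lemma evalSeq_eq (Γ : List PForm) (δ : PForm) :
    evalSeq v ((Γ, δ) : Sequent) = meetL v Γ ⇨ evalForm v δ := rfl

lemma meetL_cons (φ : PForm) (Γ : List PForm) :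
    meetL v (φ :: Γ) = evalForm v φ ⊓ meetL v Γ := rfl

lemma evalHyp_cons (S : Sequent) (G : Hypersequent) :
    evalHyp v (S :: G) = evalSeq v S ⊔ evalHyp v G := rfl

lemma evalHyp_append (G G' : Hypersequent) :
    evalHyp v (G ++ G') = evalHyp v G ⊔ evalHyp v G' := by
  induction G with
  | nil => simp [evalHyp]
  | cons S G ih =>
      simp only [List.cons_append, evalHyp_cons, ih, sup_assoc]

lemma mono1 {a a' g : H} (h : a ≤ a') (hp : ⊤ ≤ a ⊔ g) : ⊤ ≤ a' ⊔ g :=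
  hp.trans (sup_le_sup_right h g)

lemma mono2 {a₁ a₂ a' g : H} (h : a₁ ⊓ a₂ ≤ a')
    (h1 : ⊤ ≤ a₁ ⊔ g) (h2 : ⊤ ≤ a₂ ⊔ g) : ⊤ ≤ a' ⊔ g := by
  have : ⊤ ≤ (a₁ ⊓ a₂) ⊔ g := by
    rw [sup_inf_right]; exact le_inf h1 h2
  exact this.trans (sup_le_sup_right h g)

lemma meetL_append (Γ Γ' : List PForm) :
    meetL v (Γ ++ Γ') = meetL v Γ ⊓ meetL v Γ' := by
  induction Γ with
  | nil => simp [meetL]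
  | cons φ Γ ih => simp only [List.cons_append, meetL_cons, ih, inf_assoc]

lemma meetL_exch (Γ₁ : List PForm) (φ ψ : PForm) (Γ₂ : List PForm) :
    meetL v (Γ₁ ++ φ :: ψ :: Γ₂) = meetL v (Γ₁ ++ ψ :: φ :: Γ₂) := by
  induction Γ₁ with
  | nil => simp only [List.nil_append, meetL_cons, inf_left_comm]
  | cons χ Γ₁ ih => simp only [List.cons_append, meetL_cons, ih]

lemma cut_key (a b c d : H) : (a ⇨ b) ⊓ (b ⊓ c ⇨ d) ⊓ (a ⊓ c) ≤ d := by
  have hb : (a ⇨ b) ⊓ (b ⊓ c ⇨ d) ⊓ (a ⊓ c) ≤ b :=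
    le_trans (inf_le_inf inf_le_left inf_le_left) himp_inf_le
  refine le_trans (le_inf (le_inf hb (inf_le_right.trans inf_le_right))
    (inf_le_left.trans inf_le_right)) inf_himp_le

lemma impL_key (a b c d : H) :
    (a ⇨ b) ⊓ (c ⊓ a ⇨ d) ⊓ ((b ⇨ c) ⊓ a) ≤ d := by
  have hb : (a ⇨ b) ⊓ (c ⊓ a ⇨ d) ⊓ ((b ⇨ c) ⊓ a) ≤ b :=
    le_trans (inf_le_inf inf_le_left inf_le_right) himp_inf_le
  have hc : (a ⇨ b) ⊓ (c ⊓ a ⇨ d) ⊓ ((b ⇨ c) ⊓ a) ≤ c :=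
    le_trans (le_inf (inf_le_right.trans inf_le_left) hb) himp_inf_le
  exact le_trans (le_inf (le_inf hc (inf_le_right.trans inf_le_right))
    (inf_le_left.trans inf_le_right)) inf_himp_le

end Aux

/-- Soundness of HLJ with respect to Heyting algebra semantics: if HLJ
derives `Γ₁ ⇒ φ₁ | ⋯ | Γₙ ⇒ φₙ`, then for every Heyting algebra valuation
`v` we have `⊤ ≤ ⨆ᵢ (⟦⋀Γᵢ⟧ᵥ ⇨ ⟦φᵢ⟧ᵥ)`. -/
theorem HLJ_sound {G : Hypersequent} (hG : HLJ G) {H : Type*}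
    [HeytingAlgebra H] (v : ℕ → H) : ⊤ ≤ evalHyp v G := by
  induction hG with
  | id φ =>
      refine le_trans ?_ le_sup_left
      rw [evalSeq_eq, le_himp_iff]
      exact le_trans inf_le_right (inf_le_left)
  | bot φ =>
      refine le_trans ?_ le_sup_left
      rw [evalSeq_eq, le_himp_iff, meetL_cons]
      exact le_trans inf_le_right (le_trans inf_le_left bot_le)
  | ew S h ih => exact ih.trans le_sup_right
  | ec h ih =>
      have := ih
      rwa [evalHyp_cons, evalHyp_cons, ← sup_assoc, sup_idem] at this
  | ee G h ih =>
      have := ih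
      rw [evalHyp_append, evalHyp_cons, evalHyp_cons] at this ⊢
      rwa [sup_left_comm (evalSeq v _)] at this
  | iwL φ h ih =>
      refine mono1 ?_ ih
      rw [evalSeq_eq, evalSeq_eq, le_himp_iff, meetL_cons]
      exact le_trans (inf_le_inf_left _ inf_le_right) himp_inf_le
  | icL h ih =>
      refine mono1 ?_ ih
      rw [evalSeq_eq, evalSeq_eq, meetL_cons, meetL_cons,
        ← inf_assoc, inf_idem]
  | ieL Γ₁ h ih =>
      refine mono1 ?_ ih
      rw [evalSeq_eq, evalSeq_eq, meetL_exch]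
  | cut h1 h2 ih1 ih2 =>
      refine mono2 ?_ ih1 ih2
      rw [evalSeq_eq, evalSeq_eq, evalSeq_eq, meetL_cons, meetL_append,
        le_himp_iff]
      exact cut_key _ _ _ _
  | andL₁ φ₂ h ih =>
      refine mono1 ?_ ih
      rw [evalSeq_eq, evalSeq_eq, le_himp_iff, meetL_cons, meetL_cons]
      refine le_trans (inf_le_inf_left _ ?_) himp_inf_le
      exact inf_le_inf_right _ (by exact inf_le_left : evalForm v _ ⊓ _ ≤ _)
  | andL₂ φ₁ h ih =>
      refine mono1 ?_ ih
      rw [evalSeq_eq, evalSeq_eq, le_himp_iff, meetL_cons, meetL_cons]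
      refine le_trans (inf_le_inf_left _ ?_) himp_inf_le
      exact inf_le_inf_right _ (by exact inf_le_right : evalForm v _ ⊓ _ ≤ _)
  | andR h1 h2 ih1 ih2 =>
      refine mono2 ?_ ih1 ih2
      rw [evalSeq_eq, evalSeq_eq, evalSeq_eq]
      exact (himp_inf_distrib _ _ _).ge
  | orL h1 h2 ih1 ih2 =>
      refine mono2 ?_ ih1 ih2
      rw [evalSeq_eq, evalSeq_eq, evalSeq_eq, meetL_cons, meetL_cons,
        meetL_cons]
      show _ ≤ (_ ⊔ _) ⊓ _ ⇨ _
      rw [inf_sup_right, sup_himp_distrib]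
  | orR₁ ψ h ih =>
      refine mono1 ?_ ih
      rw [evalSeq_eq, evalSeq_eq]
      exact himp_le_himp_left le_sup_left
  | orR₂ φ h ih =>
      refine mono1 ?_ ih
      rw [evalSeq_eq, evalSeq_eq]
      exact himp_le_himp_left le_sup_right
  | impL h1 h2 ih1 ih2 =>
      refine mono2 ?_ ih1 ih2
      rw [evalSeq_eq, evalSeq_eq, evalSeq_eq, meetL_cons, meetL_cons,
        le_himp_iff]
      exact impL_key _ _ _ _
  | impR h ih =>
      refine mono1 ?_ ih
      rw [evalSeq_eq, evalSeq_eq, meetL_cons]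
      show evalForm v _ ⊓ _ ⇨ _ ≤ _ ⇨ _ ⇨ _
      rw [himp_himp, inf_comm]
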